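/- arXiv:1204.4716 — 2 statements merged into one kernel-verified Lean document; each statement's English description precedes it below -/
import Mathlib

section
/- Let F be a field and a_1, ..., a_n, b_1, ..., b_n ∈ F be such that a_i + b_j ≠ 0 for all i, j. Then the determinant of the n×n matrix whose (i,j) entry is 1/(a_i + b_j) equals [∏_{1 ≤ i < j ≤ n} (a_j − a_i)(b_j − b_i)] / [∏_{i=1}^n ∏_{j=1}^n (a_i + b_j)]. -/
/-- Cauchy's double alternant (1841): if `a i + b j ≠ 0` for all `i, j`, then
`det (1/(a i + b j)) = ∏_{i<j} (a j - a i)(b j - b i) / ∏_{i,j} (a i + b j)`. -/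
theorem cauchy_determinant {F : Type*} [Field F] {n : ℕ} (a b : Fin n → F)
    (hab : ∀ i j : Fin n, a i + b j ≠ 0) :
    (Matrix.of fun i j : Fin n => (a i + b j)⁻¹).det =
      (∏ i : Fin n, ∏ j ∈ Finset.Ioi i, (a j - a i) * (b j - b i)) /
        ∏ i : Fin n, ∏ j : Fin n, (a i + b j) := by
  induction n with
  | zero => simp [Matrix.det_fin_zero]
  | succ n ih =>
    -- Step 1: subtract row 0 from every other row.
    set M' : Matrix (Fin (n+1)) (Fin (n+1)) F :=
      Matrix.of (fun i j => if i = 0 then (a 0 + b j)⁻¹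
        else (a i + b j)⁻¹ - (a 0 + b j)⁻¹) with hM'
    have h1 : (Matrix.of fun i j : Fin (n+1) => (a i + b j)⁻¹).det = M'.det := by
      apply Matrix.det_eq_of_forall_row_eq_smul_add_const
        (fun i => if i = 0 then 0 else 1) 0 (by simp)
      intro i j
      by_cases hi : i = 0 <;> simp [hM', hi]
    -- Step 2: factor rows and columns.
    set N : Matrix (Fin (n+1)) (Fin (n+1)) F :=
      Matrix.of (fun i j => if i = 0 then 1 else (a i + b j)⁻¹) with hN
    have h2 : M'.det =
        (∏ i : Fin (n+1), (if i = 0 then 1 else a 0 - a i)) *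
          ((∏ j : Fin (n+1), (a 0 + b j)⁻¹) * N.det) := by
      have hentry : ∀ i j, M' i j =
          (if i = 0 then 1 else a 0 - a i) * ((a 0 + b j)⁻¹ * N i j) := by
        intro i j
        by_cases hi : i = 0
        · simp [hM', hN, hi]
        · have h1 := hab i j
          have h2 := hab 0 j
          simp only [hM', hN, Matrix.of_apply, if_neg hi]
          rw [inv_sub_inv h1 h2, div_eq_mul_inv, mul_inv]
          ring
      calc M'.det = (Matrix.of fun i j =>
            (if i = 0 then 1 else a 0 - a i) *
              (Matrix.of (fun i j => (a 0 + b j)⁻¹ * N i j) i j)).det := by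
            congr 1; ext i j; exact hentry i j
        _ = _ := by
            rw [Matrix.det_mul_column]
            congr 1
            exact Matrix.det_mul_row (fun j => (a 0 + b j)⁻¹) N
    -- Step 3: subtract column 0 from every other column (via transpose).
    set N' : Matrix (Fin (n+1)) (Fin (n+1)) F :=
      Matrix.of (fun i j =>
        if j = 0 then (if i = 0 then 1 else (a i + b 0)⁻¹)
        else (if i = 0 then 0 else (a i + b j)⁻¹ - (a i + b 0)⁻¹)) with hN'
    have h3 : N.det = N'.det := by
      rw [← Matrix.det_transpose N, ← Matrix.det_transpose N']
      apply Matrix.det_eq_of_forall_row_eq_smul_add_const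
        (fun j => if j = 0 then 0 else 1) 0 (by simp)
      intro j i
      by_cases hj : j = 0 <;> by_cases hi : i = 0 <;>
        simp [hN, hN', Matrix.transpose_apply, hi, hj]
    -- Step 4: factor again.
    set P : Matrix (Fin (n+1)) (Fin (n+1)) F :=
      Matrix.of (fun i j =>
        if j = 0 then 1
        else (if i = 0 then 0 else (a i + b j)⁻¹)) with hP
    have h4 : N'.det =
        (∏ i : Fin (n+1), (if i = 0 then 1 else (a i + b 0)⁻¹)) *
          ((∏ j : Fin (n+1), (if j = 0 then 1 else b 0 - b j)) * P.det) := by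
      have hentry : ∀ i j, N' i j =
          (if i = 0 then 1 else (a i + b 0)⁻¹) *
            ((if j = 0 then 1 else b 0 - b j) * P i j) := by
        intro i j
        by_cases hi : i = 0 <;> by_cases hj : j = 0 <;>
            simp only [hN', hP, Matrix.of_apply, hi, hj, if_true, if_false,
              one_mul, mul_one, mul_zero, zero_mul, ite_true, ite_false]
        · have h1 := hab i j
          have h2 := hab i 0
          rw [inv_sub_inv h1 h2, div_eq_mul_inv, mul_inv]
          ring
      calc N'.det = (Matrix.of fun i j =>
            (if i = 0 then 1 else (a i + b 0)⁻¹) *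
              (Matrix.of (fun i j => (if j = 0 then 1 else b 0 - b j) * P i j) i j)).det := by
            congr 1; ext i j; exact hentry i j
        _ = _ := by
            rw [Matrix.det_mul_column]
            congr 1
            exact Matrix.det_mul_row (fun j => if j = 0 then 1 else b 0 - b j) P
    -- Step 5: expand P along row 0; only the (0,0) entry survives.
    have h5 : P.det =
        (Matrix.of fun i j : Fin n => (a i.succ + b j.succ)⁻¹).det := by
      rw [Matrix.det_succ_row_zero, Fin.sum_univ_succ]
      have hz : ∀ j : Fin n, (-1 : F) ^ ((j.succ : Fin (n+1)) : ℕ) * P 0 j.succ *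
          (P.submatrix Fin.succ (Fin.succAbove j.succ)).det = 0 := by
        intro j
        have : P 0 j.succ = 0 := by simp [hP, Fin.succ_ne_zero]
        rw [this]; ring
      rw [Finset.sum_congr rfl (fun j _ => hz j), Finset.sum_const, smul_zero, add_zero]
      have h00 : P 0 0 = 1 := by simp [hP]
      rw [h00]
      simp only [Fin.val_zero, pow_zero, one_mul, mul_one]
      refine congrArg Matrix.det ?_
      ext i j
      simp [hP, Fin.succ_ne_zero]
    -- Put everything together.
    rw [h1, h2, h3, h4, h5, ih (fun i => a i.succ) (fun j => b j.succ)
      (fun i j => hab i.succ j.succ)]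
    -- Simplify the `if`-products.
    rw [Fin.prod_univ_succ (f := fun i : Fin (n+1) => if i = 0 then 1 else a 0 - a i),
        Fin.prod_univ_succ (f := fun i : Fin (n+1) => if i = 0 then (1:F) else (a i + b 0)⁻¹),
        Fin.prod_univ_succ (f := fun j : Fin (n+1) => if j = 0 then (1:F) else b 0 - b j)]
    simp only [if_pos rfl, one_mul, Fin.succ_ne_zero, if_false]
    -- Split the RHS products.
    have hnum : (∏ i : Fin (n+1), ∏ j ∈ Finset.Ioi i, (a j - a i) * (b j - b i)) =
        (∏ j : Fin n, (a j.succ - a 0) * (b j.succ - b 0)) *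
          ∏ i : Fin n, ∏ j ∈ Finset.Ioi i, (a j.succ - a i.succ) * (b j.succ - b i.succ) := by
      rw [Fin.prod_univ_succ, Fin.prod_Ioi_zero]
      congr 1
      exact Finset.prod_congr rfl (fun i _ => Fin.prod_Ioi_succ _ i)
    have hden : (∏ i : Fin (n+1), ∏ j : Fin (n+1), (a i + b j)) =
        ((∏ j : Fin (n+1), (a 0 + b j)) * ∏ i : Fin n, (a i.succ + b 0)) *
          ∏ i : Fin n, ∏ j : Fin n, (a i.succ + b j.succ) := by
      rw [Fin.prod_univ_succ (f := fun i => ∏ j : Fin (n+1), (a i + b j))]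
      rw [mul_assoc, ← Finset.prod_mul_distrib]
      congr 1
      exact Finset.prod_congr rfl (fun i _ => Fin.prod_univ_succ (f := fun j => a i.succ + b j))
    rw [hnum, hden]
    -- Now pure field algebra with nonzero products.
    have hA : (∏ j : Fin (n+1), (a 0 + b j)) ≠ 0 :=
      Finset.prod_ne_zero_iff.mpr (fun j _ => hab 0 j)
    have hB : (∏ i : Fin n, (a i.succ + b 0)) ≠ 0 :=
      Finset.prod_ne_zero_iff.mpr (fun i _ => hab i.succ 0)
    have hD : (∏ i : Fin n, ∏ j : Fin n, (a i.succ + b j.succ)) ≠ 0 :=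
      Finset.prod_ne_zero_iff.mpr (fun i _ =>
        Finset.prod_ne_zero_iff.mpr (fun j _ => hab i.succ j.succ))
    have hsgn : (∏ i : Fin n, (a 0 - a i.succ)) * (∏ j : Fin n, (b 0 - b j.succ)) =
        ∏ j : Fin n, (a j.succ - a 0) * (b j.succ - b 0) := by
      rw [← Finset.prod_mul_distrib]
      exact Finset.prod_congr rfl (fun j _ => by ring)
    rw [Finset.prod_inv_distrib, Finset.prod_inv_distrib]
    rw [eq_div_iff (mul_ne_zero (mul_ne_zero hA hB) hD), ← hsgn]
    field_simp
    simp only [if_true]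
    ring
end

section
/- Let F be a field and let f be a polynomial in n variables X_1, ..., X_n over F. If for every pair of indices i < j the polynomial obtained from f by substituting X_i for X_j is zero, then the difference-product ∏_{1 ≤ i < j ≤ n} (X_j − X_i) divides f in F[X_1, ..., X_n]. -/
open MvPolynomial

private lemma key_sub_dvd {F : Type*} [CommRing F] {n : ℕ} (i j : Fin n)
    (f : MvPolynomial (Fin n) F) :
    (X j - X i : MvPolynomial (Fin n) F) ∣
      f - (aeval fun k : Fin n => if k = j then (X i : MvPolynomial (Fin n) F) else X k) f := by
  induction f using MvPolynomial.induction_on with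
  | C a => simp
  | add p q hp hq =>
    rw [map_add, add_sub_add_comm]
    exact dvd_add hp hq
  | mul_X p k hp =>
    rw [map_mul, aeval_X]
    have : p * X k - (aeval fun k : Fin n => if k = j then (X i : MvPolynomial (Fin n) F)
        else X k) p * (if k = j then (X i : MvPolynomial (Fin n) F) else X k) =
        (p - (aeval fun k : Fin n => if k = j then (X i : MvPolynomial (Fin n) F) else X k) p)
          * X k +
        (aeval fun k : Fin n => if k = j then (X i : MvPolynomial (Fin n) F) else X k) p *
          (X k - (if k = j then (X i : MvPolynomial (Fin n) F) else X k)) := by ring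
    rw [this]
    refine dvd_add (hp.mul_right _) (Dvd.dvd.mul_left ?_ _)
    by_cases h : k = j <;> simp [h]

private lemma prime_X_sub_X {F : Type*} [Field F] {n : ℕ} {i j : Fin n} (h : i ≠ j) :
    Prime (X j - X i : MvPolynomial (Fin n) F) := by
  have hne : (X j - X i : MvPolynomial (Fin n) F) ≠ 0 := by
    rw [sub_ne_zero]
    exact fun hXX => h.symm (MvPolynomial.X_injective hXX)
  rw [← Ideal.span_singleton_prime hne]
  have hker : Ideal.span {(X j - X i : MvPolynomial (Fin n) F)} =
      RingHom.ker ((aeval fun k : Fin n => if k = j then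
        (X i : MvPolynomial (Fin n) F) else X k) : MvPolynomial (Fin n) F →ₐ[F]
        MvPolynomial (Fin n) F).toRingHom := by
    ext f
    rw [Ideal.mem_span_singleton, RingHom.mem_ker]
    constructor
    · rintro ⟨c, rfl⟩
      simp [h.symm]
    · intro hf
      have := key_sub_dvd i j f
      rwa [show ((aeval fun k : Fin n => if k = j then (X i : MvPolynomial (Fin n) F)
        else X k) f : MvPolynomial (Fin n) F) = (((aeval fun k : Fin n => if k = j then
        (X i : MvPolynomial (Fin n) F) else X k) : MvPolynomial (Fin n) F →ₐ[F]
        MvPolynomial (Fin n) F).toRingHom f) from rfl, hf, sub_zero] at this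
  rw [hker]
  exact RingHom.ker_isPrime _

private lemma prod_primes_dvd' {α : Type*} [CommMonoidWithZero α] [IsCancelMulZero α] {ι : Type*}
    (s : Finset ι) (p : ι → α) (n : α) (hp : ∀ i ∈ s, Prime (p i))
    (hd : ∀ i ∈ s, p i ∣ n) (hne : ∀ i ∈ s, ∀ j ∈ s, i ≠ j → ¬ (p i ∣ p j)) :
    ∏ i ∈ s, p i ∣ n := by
  classical
  induction s using Finset.induction_on generalizing n with
  | empty => simp
  | @insert a s ha IH =>
    obtain ⟨m, rfl⟩ := hd a (Finset.mem_insert_self a s)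
    rw [Finset.prod_insert ha]
    refine mul_dvd_mul_left _ (IH m (fun i hi => hp i (Finset.mem_insert_of_mem hi))
      (fun i hi => ?_) (fun i hi j hj hij => hne i (Finset.mem_insert_of_mem hi) j
        (Finset.mem_insert_of_mem hj) hij))
    have hpi := hp i (Finset.mem_insert_of_mem hi)
    rcases hpi.2.2 _ _ (hd i (Finset.mem_insert_of_mem hi)) with h | h
    · exact absurd h (hne i (Finset.mem_insert_of_mem hi) a (Finset.mem_insert_self a s)
        (fun e => ha (e ▸ hi)))
    · exact h

open MvPolynomial in
/-- If a polynomial `f` in `n` variables over a field vanishes whenever the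
variable `X j` is replaced by `X i` (for every pair `i < j`), then the
difference-product `∏_{i<j} (X j - X i)` divides `f`. -/
theorem differenceProduct_dvd_of_vanishing {F : Type*} [Field F] {n : ℕ}
    (f : MvPolynomial (Fin n) F)
    (hf : ∀ i j : Fin n, i < j →
      (aeval fun k : Fin n => if k = j then (X i : MvPolynomial (Fin n) F) else X k) f = 0) :
    (∏ i : Fin n, ∏ j ∈ Finset.Ioi i, (X j - X i : MvPolynomial (Fin n) F)) ∣ f := by
  classical
  rw [Finset.prod_sigma']
  refine prod_primes_dvd' _ _ f ?_ ?_ ?_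
  · rintro ⟨i, j⟩ hij
    simp only [Finset.mem_sigma, Finset.mem_univ, Finset.mem_Ioi, true_and] at hij
    exact prime_X_sub_X hij.ne
  · rintro ⟨i, j⟩ hij
    simp only [Finset.mem_sigma, Finset.mem_univ, Finset.mem_Ioi, true_and] at hij
    have := key_sub_dvd i j f
    rwa [hf i j hij, sub_zero] at this
  · rintro ⟨i, j⟩ hij ⟨k, l⟩ hkl hne hdvd
    simp only [Finset.mem_sigma, Finset.mem_univ, Finset.mem_Ioi, true_and] at hij hkl
    -- find v : Fin n → F with v i = v j and v k ≠ v l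
    obtain ⟨v, hv1, hv2⟩ : ∃ v : Fin n → F, v i = v j ∧ v k ≠ v l := by
      by_cases hjl : j = l
      · refine ⟨fun x => if x = k then 1 else 0, ?_, ?_⟩
        · have hik : i ≠ k := fun e => hne (by rw [e, hjl])
          have hjk : j ≠ k := fun e => hkl.ne (e.symm.trans hjl)
          simp [hik, hjk]
        · have : l ≠ k := hkl.ne'
          simp [this]
      · by_cases hil : i = l
        · refine ⟨fun x => if x = k then 1 else 0, ?_, ?_⟩
          · have hik : i ≠ k := fun e => hkl.ne (e.symm.trans hil)
            have hlj : l < j := by rw [← hil]; exact hij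
            have hjk : j ≠ k := (hkl.trans hlj).ne'
            simp [hik, hjk]
          · have : l ≠ k := hkl.ne'
            simp [this]
        · refine ⟨fun x => if x = l then 1 else 0, ?_, ?_⟩
          · simp [hil, hjl]
          · have : k ≠ l := hkl.ne
            simp [this]
    have := map_dvd (eval v) hdvd
    simp only [map_sub, eval_X] at this
    rw [← hv1, sub_self] at this
    exact hv2 (sub_eq_zero.mp (zero_dvd_iff.mp this)).symm
end
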